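/- Let M_n(ℂ) with normalized trace τ and c > 1. On the set GL_c := { x positive definite : (1/c) I ≤ x ≤ c I }, the metric d(a,b) = ‖log(a^{-1/2} b a^{-1/2})‖_2 is bi-Lipschitz equivalent to the metric induced by the norm ‖a - b‖_2, i.e., there exist constants 0 < k ≤ K (depending only on c) with k‖a-b‖_2 ≤ d(a,b) ≤ K‖a-b‖_2 for all a, b ∈ GL_c. -/

import Mathlib

open scoped Matrix.Norms.L2Operator

open Matrix ComplexOrder

variable {n : ℕ}

/-- The normalized trace on `n × n` complex matrices. -/
noncomputable def normTrace (x : Matrix (Fin n) (Fin n) ℂ) : ℂ := Matrix.trace x / n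

/-- The `L²`-norm `τ(x* x)^{1/2}` coming from the normalized trace. -/
noncomputable def l2normM (x : Matrix (Fin n) (Fin n) ℂ) : ℝ :=
  Real.sqrt (normTrace (xᴴ * x)).re

/-- The positive square root of a positive definite matrix (via continuous functional
calculus, using the `L²`-operator norm C*-structure on matrices). -/
noncomputable def matSqrt (a : Matrix (Fin n) (Fin n) ℂ) : Matrix (Fin n) (Fin n) ℂ :=
  cfc Real.sqrt a

/-- The distance `d(a,b) = ‖log (a⁻¹ᐟ² b a⁻¹ᐟ²)‖₂` on positive definite matrices, where
`log` is the logarithm of positive definite matrices. -/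
noncomputable def pdDist (a b : Matrix (Fin n) (Fin n) ℂ) : ℝ :=
  l2normM (CFC.log ((matSqrt a)⁻¹ * b * (matSqrt a)⁻¹))

/-- Membership in `GL_c`, i.e. `x` is positive definite with `(1/c) I ≤ x ≤ c I` in the
Loewner order. -/
def memGLc (c : ℝ) (x : Matrix (Fin n) (Fin n) ℂ) : Prop :=
  x.PosDef ∧ (x - (c⁻¹ : ℂ) • 1).PosSemidef ∧ ((c : ℂ) • 1 - x).PosSemidef

namespace MyHelp

variable {A : Matrix (Fin n) (Fin n) ℂ} (hA : A.IsHermitian)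

local notation "𝓤" => (Matrix.IsHermitian.eigenvectorUnitary hA : Matrix (Fin n) (Fin n) ℂ)

lemma star_mul_self : (star 𝓤) * 𝓤 = 1 :=
  Unitary.star_mul_self_of_mem (Matrix.IsHermitian.eigenvectorUnitary hA).2

lemma mul_star_self : 𝓤 * (star 𝓤) = 1 :=
  Unitary.mul_star_self_of_mem (Matrix.IsHermitian.eigenvectorUnitary hA).2

lemma mcfc_mul (f g : ℝ → ℝ) :
    hA.cfc f * hA.cfc g = hA.cfc (fun t => f t * g t) := by
  have h : ∀ (x y z u v w : Matrix (Fin n) (Fin n) ℂ),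
      (x * y * z) * (u * v * w) = x * (y * (z * u) * v) * w := by
    intros; simp only [mul_assoc]
  simp only [Matrix.IsHermitian.cfc, Unitary.conjStarAlgAut_apply, Unitary.coe_star, h, star_mul_self hA, mul_one, diagonal_mul_diagonal]
  congr! with i
  simp

lemma mcfc_congr {f g : ℝ → ℝ} (h : ∀ i, f (hA.eigenvalues i) = g (hA.eigenvalues i)) :
    hA.cfc f = hA.cfc g := by
  have hd : ((RCLike.ofReal : ℝ → ℂ) ∘ f ∘ hA.eigenvalues)
      = ((RCLike.ofReal : ℝ → ℂ) ∘ g ∘ hA.eigenvalues) := by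
    funext i; simp [h i]
  rw [Matrix.IsHermitian.cfc, Matrix.IsHermitian.cfc, hd]

lemma mcfc_const (r : ℝ) : hA.cfc (fun _ => r) = (r : ℂ) • 1 := by
  have hd : (diagonal ((RCLike.ofReal : ℝ → ℂ) ∘ (fun _ => r) ∘ hA.eigenvalues)
      : Matrix (Fin n) (Fin n) ℂ) = (r : ℂ) • 1 := by
    ext i j
    by_cases h : i = j <;> simp [diagonal, h, one_apply]
  rw [Matrix.IsHermitian.cfc, hd]; simp only [Unitary.conjStarAlgAut_apply, Unitary.coe_star]
  rw [mul_smul_comm, smul_mul_assoc, mul_one, mul_star_self hA]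

lemma mcfc_one : hA.cfc (fun _ => 1) = 1 := by
  rw [mcfc_const hA 1]; simp

lemma mcfc_id : hA.cfc (fun t => t) = A := by
  conv_rhs => rw [hA.spectral_theorem]
  rfl

lemma mcfc_sub (f g : ℝ → ℝ) :
    hA.cfc f - hA.cfc g = hA.cfc (fun t => f t - g t) := by
  have hd : (diagonal ((RCLike.ofReal : ℝ → ℂ) ∘ f ∘ hA.eigenvalues)
        - diagonal ((RCLike.ofReal : ℝ → ℂ) ∘ g ∘ hA.eigenvalues) : Matrix (Fin n) (Fin n) ℂ)
      = diagonal ((RCLike.ofReal : ℝ → ℂ) ∘ (fun t => f t - g t) ∘ hA.eigenvalues) := by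
    ext i j
    by_cases hij : i = j <;> simp [diagonal, hij]
  rw [Matrix.IsHermitian.cfc, Matrix.IsHermitian.cfc, Matrix.IsHermitian.cfc]; simp only [Unitary.conjStarAlgAut_apply, Unitary.coe_star]
  rw [← sub_mul, ← mul_sub, hd]

lemma mcfc_add (f g : ℝ → ℝ) :
    hA.cfc f + hA.cfc g = hA.cfc (fun t => f t + g t) := by
  have hd : (diagonal ((RCLike.ofReal : ℝ → ℂ) ∘ f ∘ hA.eigenvalues)
        + diagonal ((RCLike.ofReal : ℝ → ℂ) ∘ g ∘ hA.eigenvalues) : Matrix (Fin n) (Fin n) ℂ)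
      = diagonal ((RCLike.ofReal : ℝ → ℂ) ∘ (fun t => f t + g t) ∘ hA.eigenvalues) := by
    ext i j
    by_cases hij : i = j <;> simp [diagonal, hij]
  rw [Matrix.IsHermitian.cfc, Matrix.IsHermitian.cfc, Matrix.IsHermitian.cfc]; simp only [Unitary.conjStarAlgAut_apply, Unitary.coe_star]
  rw [← add_mul, ← mul_add, hd]

lemma mcfc_smul (r : ℝ) (f : ℝ → ℝ) :
    (r : ℂ) • hA.cfc f = hA.cfc (fun t => r * f t) := by
  have hd : ((RCLike.ofReal : ℝ → ℂ) ∘ (fun t => r * f t) ∘ hA.eigenvalues)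
      = (r : ℂ) • ((RCLike.ofReal : ℝ → ℂ) ∘ f ∘ hA.eigenvalues) := by
    funext i; simp
  rw [Matrix.IsHermitian.cfc, Matrix.IsHermitian.cfc, hd, diagonal_smul]; simp only [Unitary.conjStarAlgAut_apply, Unitary.coe_star]
  rw [mul_smul_comm,
    smul_mul_assoc]

lemma mcfc_isHermitian (f : ℝ → ℝ) : (hA.cfc f).IsHermitian := by
  rw [← hA.cfc_eq]
  exact (cfc_predicate f A : IsSelfAdjoint _)

lemma mcfc_posSemidef {f : ℝ → ℝ} (h : ∀ i, 0 ≤ f (hA.eigenvalues i)) :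
    (hA.cfc f).PosSemidef := by
  rw [Matrix.IsHermitian.cfc]; simp only [Unitary.conjStarAlgAut_apply, Unitary.coe_star]
  refine (posSemidef_diagonal_iff.mpr ?_).mul_mul_conjTranspose_same _
  intro i
  simpa using h i

lemma eig_nonneg_of_psd {f : ℝ → ℝ} (h : (hA.cfc f).PosSemidef) :
    ∀ i, 0 ≤ f (hA.eigenvalues i) := by
  have h2 := h.conjTranspose_mul_mul_same 𝓤
  rw [Matrix.IsHermitian.cfc] at h2; simp only [Unitary.conjStarAlgAut_apply, Unitary.coe_star] at h2
  rw [← star_eq_conjTranspose] at h2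
  have key : (star 𝓤) * (𝓤 * diagonal ((RCLike.ofReal : ℝ → ℂ) ∘ f ∘ hA.eigenvalues) * star 𝓤)
        * 𝓤 = diagonal ((RCLike.ofReal : ℝ → ℂ) ∘ f ∘ hA.eigenvalues) := by
    simp only [mul_assoc, star_mul_self hA, mul_one]
    rw [← mul_assoc, star_mul_self hA, one_mul]
  rw [key] at h2
  intro i
  simpa using posSemidef_diagonal_iff.mp h2 i

lemma mcfc_trace (f : ℝ → ℝ) :
    (hA.cfc f).trace = ∑ i, (f (hA.eigenvalues i) : ℂ) := by
  rw [Matrix.IsHermitian.cfc]; simp only [Unitary.conjStarAlgAut_apply, Unitary.coe_star]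
  rw [trace_mul_cycle, star_mul_self hA, one_mul, trace_diagonal]
  rfl


lemma trace_psd_nonneg {P : Matrix (Fin n) (Fin n) ℂ} (hP : P.PosSemidef) : 0 ≤ P.trace := by
  rw [Matrix.trace]
  refine Finset.sum_nonneg fun i _ => ?_
  have := hP.dotProduct_mulVec_nonneg (Pi.single i 1)
  simpa [Matrix.diag, dotProduct, Pi.single_apply] using this

lemma trace_mul_psd_nonneg {P Q : Matrix (Fin n) (Fin n) ℂ} (hP : P.PosSemidef)
    (hQ : Q.PosSemidef) : 0 ≤ (P * Q).trace := by
  obtain ⟨B, rfl⟩ : ∃ B : Matrix (Fin n) (Fin n) ℂ, P = Bᴴ * B := by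
    open scoped MatrixOrder in
    exact CStarAlgebra.nonneg_iff_eq_star_mul_self.mp hP.nonneg
  rw [← trace_mul_cycle]
  exact trace_psd_nonneg (hQ.mul_mul_conjTranspose_same B)

lemma trace_mul_le_smul_one {a X : Matrix (Fin n) (Fin n) ℂ} (c : ℝ) (hX : X.PosSemidef)
    (h : ((c : ℂ) • 1 - a).PosSemidef) : ((X * a).trace).re ≤ c * (X.trace).re := by
  have h0 : 0 ≤ ((X * ((c : ℂ) • 1 - a)).trace) := trace_mul_psd_nonneg hX h
  rw [mul_sub, mul_smul_comm, mul_one, trace_sub, trace_smul] at h0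
  have h1 := (Complex.le_def.mp h0).1
  simp only [Complex.sub_re, Complex.zero_re] at h1
  have hre : ((c : ℂ) • X.trace).re = c * (X.trace).re := by
    simp [Complex.smul_re]
  linarith [h1, hre.le, hre.ge]


lemma smul_one_trace_mul_le {a X : Matrix (Fin n) (Fin n) ℂ} (c : ℝ) (hX : X.PosSemidef)
    (h : (a - (c : ℂ) • 1).PosSemidef) : c * (X.trace).re ≤ ((X * a).trace).re := by
  have h0 : 0 ≤ ((X * (a - (c : ℂ) • 1)).trace) := trace_mul_psd_nonneg hX h
  rw [mul_sub, mul_smul_comm, mul_one, trace_sub, trace_smul] at h0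
  have h1 := (Complex.le_def.mp h0).1
  simp only [Complex.sub_re, Complex.zero_re] at h1
  have hre : ((c : ℂ) • X.trace).re = c * (X.trace).re := by
    simp [Complex.smul_re]
  linarith [h1, hre.le, hre.ge]

lemma sandwich {a w : Matrix (Fin n) (Fin n) ℂ} {c : ℝ} (hc : 0 < c)
    (ha : a.PosSemidef) (hw : w.IsHermitian)
    (h1 : ((c : ℂ) • 1 - a).PosSemidef) (h2 : (a - (c⁻¹ : ℂ) • 1).PosSemidef) :
    c⁻¹ * c⁻¹ * ((w * w).trace).re ≤ ((w * a * w * a).trace).re ∧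
      ((w * a * w * a).trace).re ≤ c * c * ((w * w).trace).re := by
  have hwaw : (w * a * w).PosSemidef := by
    have := ha.conjTranspose_mul_mul_same w
    rwa [hw.eq] at this
  have hww : (w * w).PosSemidef := by
    have := posSemidef_conjTranspose_mul_self w
    rwa [hw.eq] at this
  have hcyc : (w * a * w).trace = ((w * w) * a).trace := by
    rw [trace_mul_cycle]
  have hup1 : (((w * a * w) * a).trace).re ≤ c * ((w * a * w).trace).re :=
    trace_mul_le_smul_one c hwaw h1
  have hup2 : (((w * w) * a).trace).re ≤ c * ((w * w).trace).re :=
    trace_mul_le_smul_one c hww h1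
  have h2' : (a - ((c⁻¹ : ℝ) : ℂ) • 1).PosSemidef := by
    rw [Complex.ofReal_inv]; exact h2
  have hlo1 : c⁻¹ * ((w * a * w).trace).re ≤ (((w * a * w) * a).trace).re :=
    smul_one_trace_mul_le c⁻¹ hwaw h2'
  have hlo2 : c⁻¹ * ((w * w).trace).re ≤ (((w * w) * a).trace).re :=
    smul_one_trace_mul_le c⁻¹ hww h2' 
  constructor
  · calc c⁻¹ * c⁻¹ * ((w * w).trace).re = c⁻¹ * (c⁻¹ * ((w * w).trace).re) := by ring
    _ ≤ c⁻¹ * (((w * w) * a).trace).re := by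
        have := inv_pos.mpr hc
        nlinarith [hlo2]
    _ = c⁻¹ * ((w * a * w).trace).re := by rw [hcyc]
    _ ≤ (((w * a * w) * a).trace).re := hlo1
  · calc ((w * a * w * a).trace).re ≤ c * ((w * a * w).trace).re := hup1
    _ = c * (((w * w) * a).trace).re := by rw [hcyc]
    _ ≤ c * (c * ((w * w).trace).re) := by nlinarith [hup2]
    _ = c * c * ((w * w).trace).re := by ring


lemma log_sq_bounds {c t : ℝ} (hc : 1 < c) (h1 : c⁻¹ * c⁻¹ ≤ t) (h2 : t ≤ c * c) :
    (Real.log t)^2 ≤ (c*c)^2 * (t-1)^2 ∧ (t-1)^2 ≤ (c*c)^2 * (Real.log t)^2 := by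
  have hc0 : 0 < c := lt_trans one_pos hc
  have hcc : 1 ≤ c * c := by nlinarith
  have ht0 : 0 < t := lt_of_lt_of_le (by positivity) h1
  have hup : Real.log t ≤ t - 1 := Real.log_le_sub_one_of_pos ht0
  have hlo : 1 - t⁻¹ ≤ Real.log t := by
    have := Real.log_le_sub_one_of_pos (inv_pos.mpr ht0)
    rw [Real.log_inv] at this
    linarith
  have htinv : t * t⁻¹ = 1 := mul_inv_cancel₀ ht0.ne'
  have hci : c * c⁻¹ = 1 := mul_inv_cancel₀ hc0.ne'
  have hti : t⁻¹ ≤ c * c := by nlinarith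
  rcases le_total 1 t with h | h
  · have hL0 : 0 ≤ Real.log t := Real.log_nonneg h
    have key : t - 1 ≤ (c * c) * Real.log t := by nlinarith
    constructor
    · have b1 : Real.log t ≤ (c*c) * (t-1) := by nlinarith
      have b2 : -((c*c) * (t-1)) ≤ Real.log t := by nlinarith
      calc (Real.log t)^2 ≤ ((c*c) * (t-1))^2 := sq_le_sq' b2 b1
        _ = (c*c)^2 * (t-1)^2 := by ring
    · have b1 : t - 1 ≤ (c*c) * Real.log t := key
      have b2 : -((c*c) * Real.log t) ≤ t - 1 := by nlinarith
      calc (t-1)^2 ≤ ((c*c) * Real.log t)^2 := sq_le_sq' b2 b1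
        _ = (c*c)^2 * (Real.log t)^2 := by ring
  · have hL0 : Real.log t ≤ 0 := Real.log_nonpos (le_of_lt ht0) h
    have key : -Real.log t ≤ (c * c) * (1 - t) := by nlinarith
    constructor
    · have b1 : Real.log t ≤ (c*c) * (1-t) := by nlinarith
      have b2 : -((c*c) * (1-t)) ≤ Real.log t := by nlinarith
      calc (Real.log t)^2 ≤ ((c*c) * (1-t))^2 := sq_le_sq' b2 b1
        _ = (c*c)^2 * (t-1)^2 := by ring
    · have b1 : 1 - t ≤ -((c*c) * Real.log t) := by nlinarith
      have b2 : (c*c) * Real.log t ≤ 1 - t := by nlinarith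
      calc (t-1)^2 = (1-t)^2 := by ring
        _ ≤ (-((c*c) * Real.log t))^2 := sq_le_sq' (by linarith) b1
        _ = (c*c)^2 * (Real.log t)^2 := by ring


lemma main (hn : 0 < n) {c : ℝ} (hc : 1 < c) {a b : Matrix (Fin n) (Fin n) ℂ}
    (ha : memGLc c a) (hb : memGLc c b) :
    (c^3)⁻¹ * l2normM (a - b) ≤ pdDist a b ∧ pdDist a b ≤ c^3 * l2normM (a - b) := by
  obtain ⟨hapd, ha1, ha2⟩ := ha
  obtain ⟨hbpd, hb1, hb2⟩ := hb
  have hc0 : 0 < c := lt_trans one_pos hc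
  have hn0 : (0:ℝ) < (n:ℝ) := by exact_mod_cast hn
  have hA : a.IsHermitian := hapd.1
  have hB : b.IsHermitian := hbpd.1
  -- eigenvalue bounds for a
  have haeig_lb : ∀ i, c⁻¹ ≤ hA.eigenvalues i := by
    intro i
    have he : a - (c : ℂ)⁻¹ • 1 = hA.cfc (fun t => t - c⁻¹) := by
      rw [← mcfc_sub hA (fun t => t) (fun _ => c⁻¹), mcfc_id, mcfc_const, Complex.ofReal_inv]
    have := eig_nonneg_of_psd hA (he ▸ ha1) i
    linarith
  have haeig_ub : ∀ i, hA.eigenvalues i ≤ c := by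
    intro i
    have he : (c : ℂ) • 1 - a = hA.cfc (fun t => c - t) := by
      rw [← mcfc_sub hA (fun _ => c) (fun t => t), mcfc_id, mcfc_const]
    have := eig_nonneg_of_psd hA (he ▸ ha2) i
    linarith
  have haeig_pos : ∀ i, 0 < hA.eigenvalues i :=
    fun i => lt_of_lt_of_le (inv_pos.mpr hc0) (haeig_lb i)
  -- square root machinery
  set S : Matrix (Fin n) (Fin n) ℂ := hA.cfc Real.sqrt with hS_def
  set SI : Matrix (Fin n) (Fin n) ℂ := hA.cfc (fun t => (Real.sqrt t)⁻¹) with hSI_def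
  have hmsq : matSqrt a = S := hA.cfc_eq Real.sqrt
  have hsqrt_pos : ∀ i, 0 < Real.sqrt (hA.eigenvalues i) :=
    fun i => Real.sqrt_pos.mpr (haeig_pos i)
  have h_si_s : SI * S = 1 := by
    rw [hSI_def, hS_def, mcfc_mul,
      mcfc_congr hA (g := fun _ => 1) (fun i => inv_mul_cancel₀ (hsqrt_pos i).ne'), mcfc_one]
  have h_s_si : S * SI = 1 := by
    rw [hSI_def, hS_def, mcfc_mul,
      mcfc_congr hA (g := fun _ => 1) (fun i => mul_inv_cancel₀ (hsqrt_pos i).ne'), mcfc_one]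
  have h_inv : (matSqrt a)⁻¹ = SI := by
    rw [hmsq]; exact inv_eq_left_inv h_si_s
  have h_ss : S * S = a := by
    rw [hS_def, mcfc_mul,
      mcfc_congr hA (g := fun t => t) (fun i => Real.mul_self_sqrt (haeig_pos i).le), mcfc_id]
  have hSI_herm : SI.IsHermitian := mcfc_isHermitian hA _
  have hS_herm : S.IsHermitian := mcfc_isHermitian hA _
  -- the matrix m
  set m : Matrix (Fin n) (Fin n) ℂ := SI * b * SI with hm_def
  have hm : m.IsHermitian := by
    have := isHermitian_conjTranspose_mul_mul SI hB
    rwa [hSI_herm.eq] at this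
  have conjSI : ∀ {X : Matrix (Fin n) (Fin n) ℂ}, X.PosSemidef → (SI * X * SI).PosSemidef := by
    intro X hX
    have := hX.conjTranspose_mul_mul_same SI
    rwa [hSI_herm.eq] at this
  set q : Matrix (Fin n) (Fin n) ℂ :=
    hA.cfc (fun t => (Real.sqrt t)⁻¹ * (Real.sqrt t)⁻¹) with hq_def
  have hq : SI * SI = q := by rw [hSI_def, hq_def, mcfc_mul]
  have hval : ∀ i, (Real.sqrt (hA.eigenvalues i))⁻¹ * (Real.sqrt (hA.eigenvalues i))⁻¹
      = (hA.eigenvalues i)⁻¹ := by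
    intro i
    rw [← mul_inv, Real.mul_self_sqrt (haeig_pos i).le]
  have heiginv_ub : ∀ i, (hA.eigenvalues i)⁻¹ ≤ c := by
    intro i
    rw [inv_le_comm₀ (haeig_pos i) hc0]
    exact haeig_lb i
  have heiginv_lb : ∀ i, c⁻¹ ≤ (hA.eigenvalues i)⁻¹ := by
    intro i
    rw [inv_le_inv₀ hc0 (haeig_pos i)]
    exact haeig_ub i
  -- upper bound : c*c • 1 - m is psd
  have hub : ((((c*c : ℝ)) : ℂ) • 1 - m).PosSemidef := by
    have p1 : (SI * ((c : ℂ) • 1 - b) * SI).PosSemidef := conjSI hb2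
    have e1 : SI * ((c : ℂ) • 1 - b) * SI = (c : ℂ) • q - m := by
      rw [mul_sub, sub_mul, mul_smul_comm, smul_mul_assoc, mul_one, hq, hm_def]
    have p2 : ((((c*c : ℝ)) : ℂ) • 1 - (c : ℂ) • q).PosSemidef := by
      have e2 : (((c*c : ℝ)) : ℂ) • 1 - (c : ℂ) • q
          = hA.cfc (fun t => c * c - c * ((Real.sqrt t)⁻¹ * (Real.sqrt t)⁻¹)) := by
        rw [hq_def, mcfc_smul, ← mcfc_const hA (c*c), mcfc_sub]
      rw [e2]
      apply mcfc_posSemidef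
      intro i
      rw [hval i]
      nlinarith [heiginv_ub i]
    have e3 : (((c*c : ℝ)) : ℂ) • 1 - m
        = ((((c*c : ℝ)) : ℂ) • 1 - (c : ℂ) • q) + ((c : ℂ) • q - m) := by abel
    rw [e3]
    exact p2.add (e1 ▸ p1)
  -- lower bound : m - (c⁻¹ * c⁻¹) • 1 is psd
  have hlb : (m - (((c⁻¹ * c⁻¹ : ℝ)) : ℂ) • 1).PosSemidef := by
    have p1 : (SI * (b - (c : ℂ)⁻¹ • 1) * SI).PosSemidef := conjSI hb1
    have e1 : SI * (b - (c : ℂ)⁻¹ • 1) * SI = m - (c : ℂ)⁻¹ • q := by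
      rw [mul_sub, sub_mul, mul_smul_comm, smul_mul_assoc, mul_one, hq, hm_def]
    have p2 : ((c : ℂ)⁻¹ • q - (((c⁻¹ * c⁻¹ : ℝ)) : ℂ) • 1).PosSemidef := by
      have e2 : (c : ℂ)⁻¹ • q - (((c⁻¹ * c⁻¹ : ℝ)) : ℂ) • 1
          = hA.cfc (fun t => c⁻¹ * ((Real.sqrt t)⁻¹ * (Real.sqrt t)⁻¹) - c⁻¹ * c⁻¹) := by
        rw [hq_def, ← Complex.ofReal_inv, mcfc_smul, ← mcfc_const hA (c⁻¹ * c⁻¹), mcfc_sub]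
      rw [e2]
      apply mcfc_posSemidef
      intro i
      rw [hval i]
      have h1 := heiginv_lb i
      have h2 := inv_pos.mpr hc0
      nlinarith
    have e3 : m - (((c⁻¹ * c⁻¹ : ℝ)) : ℂ) • 1
        = ((c : ℂ)⁻¹ • q - (((c⁻¹ * c⁻¹ : ℝ)) : ℂ) • 1) + (m - (c : ℂ)⁻¹ • q) := by abel
    rw [e3]
    exact p2.add (e1 ▸ p1)
  -- eigenvalue bounds for m
  have hmeig_ub : ∀ i, hm.eigenvalues i ≤ c * c := by
    intro i
    have he : (((c*c : ℝ)) : ℂ) • 1 - m = hm.cfc (fun t => c * c - t) := by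
      rw [← mcfc_sub hm (fun _ => c*c) (fun t => t), mcfc_id, mcfc_const]
    have := eig_nonneg_of_psd hm (he ▸ hub) i
    linarith
  have hmeig_lb : ∀ i, c⁻¹ * c⁻¹ ≤ hm.eigenvalues i := by
    intro i
    have he : m - (((c⁻¹ * c⁻¹ : ℝ)) : ℂ) • 1 = hm.cfc (fun t => t - c⁻¹ * c⁻¹) := by
      rw [← mcfc_sub hm (fun t => t) (fun _ => c⁻¹ * c⁻¹), mcfc_id, mcfc_const]
    have := eig_nonneg_of_psd hm (he ▸ hlb) i
    linarith
  -- quantities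
  set μ : Fin n → ℝ := hm.eigenvalues with hμ
  set Lr : ℝ := ∑ i, (Real.log (μ i))^2 with hLr
  set Sr : ℝ := ∑ i, (μ i - 1)^2 with hSr
  set w : Matrix (Fin n) (Fin n) ℂ := hm.cfc (fun t => 1 - t) with hw_def
  have hw_herm : w.IsHermitian := mcfc_isHermitian hm _
  have hw_eq : w = 1 - m := by
    rw [hw_def, ← mcfc_sub hm (fun _ => 1) (fun t => t), mcfc_one, mcfc_id]
  have hww_trace : ((w * w).trace).re = Sr := by
    rw [hw_def, mcfc_mul, mcfc_trace, ← Complex.ofReal_sum, Complex.ofReal_re, hSr]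
    apply Finset.sum_congr rfl
    intro i _
    ring
  have hsm : S * m * S = b := by
    rw [hm_def]
    calc S * (SI * b * SI) * S = (S * SI) * b * (SI * S) := by simp only [mul_assoc]
    _ = b := by rw [h_s_si, h_si_s, one_mul, mul_one]
  have hab : a - b = S * w * S := by
    rw [hw_eq, mul_sub, sub_mul, mul_one, h_ss, hsm]
  have habH : (a - b)ᴴ = a - b := (hA.sub hB).eq
  have key : ((a - b)ᴴ * (a - b)).trace = (w * a * w * a).trace := by
    rw [habH, hab]
    have e : (S * w * S) * (S * w * S) = (S * (w * a * w)) * S := by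
      rw [← h_ss]; simp only [mul_assoc]
    rw [e, trace_mul_comm, ← mul_assoc, h_ss, trace_mul_comm]
  set Tr : ℝ := (((a - b)ᴴ * (a - b)).trace).re with hTr
  have hsand := sandwich hc0 hapd.posSemidef hw_herm ha2 ha1
  have hT1 : c⁻¹ * c⁻¹ * Sr ≤ Tr := by
    rw [hTr, key, ← hww_trace]; exact hsand.1
  have hT2 : Tr ≤ c * c * Sr := by
    rw [hTr, key, ← hww_trace]; exact hsand.2
  have hLS : Lr ≤ (c*c)^2 * Sr := by
    rw [hLr, hSr, Finset.mul_sum]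
    exact Finset.sum_le_sum fun i _ => (log_sq_bounds hc (hmeig_lb i) (hmeig_ub i)).1
  have hSL : Sr ≤ (c*c)^2 * Lr := by
    rw [hLr, hSr, Finset.mul_sum]
    exact Finset.sum_le_sum fun i _ => (log_sq_bounds hc (hmeig_lb i) (hmeig_ub i)).2
  have hSr0 : 0 ≤ Sr := Finset.sum_nonneg fun i _ => sq_nonneg _
  have hLr0 : 0 ≤ Lr := Finset.sum_nonneg fun i _ => sq_nonneg _
  have hci : c * c⁻¹ = 1 := mul_inv_cancel₀ hc0.ne'
  have hTr0 : 0 ≤ Tr :=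
    le_trans (mul_nonneg (by positivity) hSr0) hT1
  -- formulas for the two metrics
  have hre : ∀ (x : ℝ), ((x : ℂ) / (n : ℂ)).re = x / n := by
    intro x
    rw [← Complex.ofReal_natCast, ← Complex.ofReal_div, Complex.ofReal_re]
  have hlog : CFC.log ((matSqrt a)⁻¹ * b * (matSqrt a)⁻¹) = hm.cfc Real.log := by
    rw [h_inv, CFC.log]
    exact hm.cfc_eq Real.log
  have hsum_log : ∑ i, Real.log (μ i) * Real.log (μ i) = Lr := by
    rw [hLr]
    apply Finset.sum_congr rfl
    intro i _
    ring
  have hd : pdDist a b = Real.sqrt (Lr / n) := by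
    simp only [pdDist, l2normM, normTrace]
    rw [hlog, (mcfc_isHermitian hm Real.log).eq, mcfc_mul, mcfc_trace, ← Complex.ofReal_sum,
      hre, hsum_log]
  have he : l2normM (a - b) = Real.sqrt (Tr / n) := by
    simp only [l2normM, normTrace]
    rw [← Complex.ofReal_natCast]
    rw [Complex.div_ofReal_re, hTr]
  -- final inequalities
  have hcc0 : (0:ℝ) ≤ c * c := le_of_lt (mul_pos hc0 hc0)
  have hS_T : Sr ≤ (c*c) * Tr := by
    have ha1' := mul_le_mul_of_nonneg_left hT1 hcc0
    have hSrr : c * c * (c⁻¹ * c⁻¹ * Sr) = Sr := by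
      field_simp
    linarith [ha1', hSrr.le, hSrr.ge]
  have h1 : Lr ≤ (c^3)^2 * Tr := by
    have e1 : (c*c)^2 * Sr ≤ (c*c)^2 * ((c*c) * Tr) :=
      mul_le_mul_of_nonneg_left hS_T (by positivity)
    have er : (c*c)^2 * ((c*c) * Tr) = (c^3)^2 * Tr := by ring
    linarith [hLS, e1, er.le, er.ge]
  have h2 : Tr ≤ (c^3)^2 * Lr := by
    have e2 : (c*c) * Sr ≤ (c*c) * ((c*c)^2 * Lr) := mul_le_mul_of_nonneg_left hSL hcc0
    have er2 : (c*c) * ((c*c)^2 * Lr) = (c^3)^2 * Lr := by ring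
    linarith [hT2, e2, er2.le, er2.ge]
  have hq1 : Lr / n ≤ (c^3)^2 * (Tr / n) := by
    rw [← mul_div_assoc]
    gcongr
  have hq2 : Tr / n ≤ (c^3)^2 * (Lr / n) := by
    rw [← mul_div_assoc]
    gcongr
  have hc3 : (0:ℝ) < c^3 := by positivity
  rw [hd, he]
  constructor
  · rw [inv_mul_le_iff₀ hc3]
    calc Real.sqrt (Tr / n) ≤ Real.sqrt ((c^3)^2 * (Lr / n)) := Real.sqrt_le_sqrt hq2
      _ = c^3 * Real.sqrt (Lr / n) := by
        rw [Real.sqrt_mul (sq_nonneg _), Real.sqrt_sq hc3.le]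
  · calc Real.sqrt (Lr / n) ≤ Real.sqrt ((c^3)^2 * (Tr / n)) := Real.sqrt_le_sqrt hq1
      _ = c^3 * Real.sqrt (Tr / n) := by
        rw [Real.sqrt_mul (sq_nonneg _), Real.sqrt_sq hc3.le]

end MyHelp

theorem stmt10 (hn : 0 < n) (c : ℝ) (hc : 1 < c) :
    ∃ k K : ℝ, 0 < k ∧ k ≤ K ∧
      ∀ a b : Matrix (Fin n) (Fin n) ℂ, memGLc c a → memGLc c b →
        k * l2normM (a - b) ≤ pdDist a b ∧ pdDist a b ≤ K * l2normM (a - b) := by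
  refine ⟨(c^3)⁻¹, c^3, by positivity, ?_, fun a b ha hb => MyHelp.main hn hc ha hb⟩
  have h0 : (0:ℝ) < c^3 := by positivity
  have hc0 : (0:ℝ) < c := lt_trans one_pos hc
  have h1 : 1 ≤ c^3 := by
    nlinarith [mul_nonneg (sub_nonneg.mpr hc.le) (sq_nonneg c),
      mul_nonneg (sub_nonneg.mpr hc.le) hc0.le, sub_nonneg.mpr hc.le]
  nlinarith [mul_inv_cancel₀ h0.ne', inv_pos.mpr h0]
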